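/- Let (X,d,μ) be a space of homogeneous type, p ∈ (0,1], and W ∈ A_p(X,ℂ^m) have A_p dimension d ∈ [0,D). Let {A_Q}_{Q∈𝒬} be reducing operators of order p for W on the dyadic cubes. Then there is a constant C > 0 such that for all dyadic cubes P, Q, ‖A_Q A_P^{-1}‖ ≤ C · max{(ℓ(P)/ℓ(Q))^{d/p}, 1} · (1 + d(z_P,z_Q)/max{ℓ(P),ℓ(Q)})^{d/p}, where z_P, z_Q are the centers and ℓ(P), ℓ(Q) the sidelengths δ^k of the cubes. -/

import Mathlib

open MeasureTheory
open scoped ENNReal ComplexOrder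

/-- The matrix `A` acting as a continuous linear map on `ℂ^m`. -/
noncomputable def matCLM {m : ℕ} (A : Matrix (Fin m) (Fin m) ℂ) :
    EuclideanSpace ℂ (Fin m) →L[ℂ] EuclideanSpace ℂ (Fin m) :=
  Matrix.toEuclideanCLM (𝕜 := ℂ) A

/-- The operator norm of a matrix on `ℂ^m`. -/
noncomputable def opN {m : ℕ} (A : Matrix (Fin m) (Fin m) ℂ) : ℝ := ‖matCLM A‖

/-- The real power `A^r` of a (Hermitian) matrix, via the spectral decomposition. -/
noncomputable def matRpow {m : ℕ} (A : Matrix (Fin m) (Fin m) ℂ) (r : ℝ) :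
    Matrix (Fin m) (Fin m) ℂ :=
  if hA : A.IsHermitian then
    (hA.eigenvectorUnitary : Matrix (Fin m) (Fin m) ℂ) *
      Matrix.diagonal (fun i => ((hA.eigenvalues i ^ r : ℝ) : ℂ)) *
      star (hA.eigenvectorUnitary : Matrix (Fin m) (Fin m) ℂ)
  else 0

lemma matCLM_mul_apply {m : ℕ} (A B : Matrix (Fin m) (Fin m) ℂ)
    (v : EuclideanSpace ℂ (Fin m)) : matCLM (A * B) v = matCLM A (matCLM B v) := by
  simp only [matCLM, map_mul]; rfl

lemma matRpow_mul_matRpow_neg {m : ℕ} {M : Matrix (Fin m) (Fin m) ℂ}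
    (hM : M.PosDef) (r : ℝ) : matRpow M r * matRpow M (-r) = 1 := by
  have hH := hM.isHermitian
  rw [matRpow, matRpow, dif_pos hH, dif_pos hH]
  set U := (hH.eigenvectorUnitary : Matrix (Fin m) (Fin m) ℂ) with hUdef
  have hU : star U * U = 1 := Unitary.coe_star_mul_self hH.eigenvectorUnitary
  have hU' : U * star U = 1 := Unitary.coe_mul_star_self hH.eigenvectorUnitary
  have hdiag : (Matrix.diagonal (fun i => ((hH.eigenvalues i ^ r : ℝ) : ℂ))) *
      (Matrix.diagonal (fun i => ((hH.eigenvalues i ^ (-r) : ℝ) : ℂ))) = 1 := by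
    rw [Matrix.diagonal_mul_diagonal]
    have : (fun i => ((hH.eigenvalues i ^ r : ℝ) : ℂ) * ((hH.eigenvalues i ^ (-r) : ℝ) : ℂ))
        = fun _ => (1 : ℂ) := by
      funext i
      have hpos : 0 < hH.eigenvalues i := hM.eigenvalues_pos i
      rw [← Complex.ofReal_mul, ← Real.rpow_add hpos]
      norm_num
    rw [this, Matrix.diagonal_one]
  calc U * Matrix.diagonal (fun i => ((hH.eigenvalues i ^ r : ℝ) : ℂ)) * star U *
        (U * Matrix.diagonal (fun i => ((hH.eigenvalues i ^ (-r) : ℝ) : ℂ)) * star U)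
      = U * (Matrix.diagonal (fun i => ((hH.eigenvalues i ^ r : ℝ) : ℂ)) * ((star U * U) *
          Matrix.diagonal (fun i => ((hH.eigenvalues i ^ (-r) : ℝ) : ℂ)))) * star U := by
        noncomm_ring
    _ = 1 := by rw [hU, one_mul, hdiag, mul_one, hU']

lemma posDef_of_posSemidef_isUnit {m : ℕ} {M : Matrix (Fin m) (Fin m) ℂ}
    (h : M.PosSemidef) (hu : IsUnit M) : M.PosDef := by
  exact h.posDef_iff_isUnit.mpr hu

lemma opN_nonneg {m : ℕ} (A : Matrix (Fin m) (Fin m) ℂ) : 0 ≤ opN A := norm_nonneg _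

lemma aux_six {A₀ : ℝ} (h : 1 ≤ A₀) : (1:ℝ) ≤ 6 * A₀ ^ 3 := by
  have h3 : (1:ℝ) ≤ A₀ ^ 3 := one_le_pow₀ h
  linarith

lemma aux_geom {A₀ C₀ L dd δj : ℝ} (hA : 0 < A₀) (hC : 0 < C₀) (hdd : 0 ≤ dd)
    (hδj : 0 ≤ δj) (hL : δj ≤ L) :
    A₀ * (2 * A₀ * C₀ * δj + dd) ≤ (2 * A₀ ^ 2 * C₀ + A₀) * (L + dd) := by
  have h1 : 0 ≤ A₀ ^ 2 * C₀ * (L - δj) :=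
    mul_nonneg (mul_nonneg (sq_nonneg A₀) hC.le) (sub_nonneg.mpr hL)
  have h2 : 0 ≤ A₀ ^ 2 * C₀ * dd := mul_nonneg (mul_nonneg (sq_nonneg A₀) hC.le) hdd
  have h3 : 0 ≤ A₀ * L := mul_nonneg hA.le (hδj.trans hL)
  nlinarith [h1, h2, h3]

set_option maxHeartbeats 2000000 in
/-- For `p ∈ (0,1]`, `W ∈ A_p(X,ℂ^m)` with `A_p` dimension
`dA ∈ [0,D)` and reducing operators `A_Q` of order `p` on the dyadic cubes, there is
`C > 0` such that for all dyadic cubes `P = cube j β` and `Q = cube k α`,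
`‖A_Q A_P⁻¹‖ ≤ C max{(ℓ(P)/ℓ(Q))^{dA/p},1} (1 + d(z_P,z_Q)/max{ℓ(P),ℓ(Q)})^{dA/p}`. -/
theorem reducing_operator_growth_p_le_one {X : Type*} [MeasurableSpace X] {ι : Type*}
    (d : X → X → ℝ) (A₀ : ℝ) (hA₀ : 1 ≤ A₀)
    (hd_nonneg : ∀ x y, 0 ≤ d x y)
    (hd_eq : ∀ x y, d x y = 0 ↔ x = y)
    (hd_symm : ∀ x y, d x y = d y x)
    (hd_tri : ∀ x y u, d x y ≤ A₀ * (d x u + d u y))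
    (μ : Measure X)
    (hballμ : ∀ (x : X) (r : ℝ), 0 < r → 0 < μ {y | d y x < r} ∧ μ {y | d y x < r} < ⊤)
    (Cμ D : ℝ) (hCμ : 1 ≤ Cμ)
    (hdoub : ∀ (x : X) (r lam : ℝ), 0 < r → 1 ≤ lam →
      μ {y | d y x < lam * r} ≤ ENNReal.ofReal (Cμ * lam ^ D) * μ {y | d y x < r})
    -- the dyadic system
    (δ c₀ C₀ : ℝ) (hδ0 : 0 < δ) (hδ1 : δ < 1) (hc₀ : 0 < c₀) (hc₀C₀ : c₀ ≤ C₀)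
    (cube : ℤ → ι → Set X) (z : ℤ → ι → X)
    (hcover : ∀ k : ℤ, (⋃ α, cube k α) = Set.univ)
    (hdisj : ∀ k : ℤ, Pairwise fun α β => Disjoint (cube k α) (cube k β))
    (hsandwich : ∀ (k : ℤ) (α : ι),
      {y | d y (z k α) < (3 * A₀ ^ 2)⁻¹ * c₀ * δ ^ k} ⊆ cube k α ∧
        cube k α ⊆ {y | d y (z k α) < 2 * A₀ * C₀ * δ ^ k})
    (hcubeμ : ∀ (k : ℤ) (α : ι), MeasurableSet (cube k α) ∧
      0 < μ (cube k α) ∧ μ (cube k α) < ⊤)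
    -- the matrix weight, its `A_p` condition and its `A_p` dimension `dA`
    (m : ℕ) (p : ℝ) (hp0 : 0 < p) (hp1 : p ≤ 1)
    (W : X → Matrix (Fin m) (Fin m) ℂ) (hW : ∀ x, (W x).PosSemidef)
    (hWinv : ∀ᵐ x ∂μ, IsUnit (W x))
    (CW : ℝ)
    (hAp : ∀ (x₀ : X) (r : ℝ), 0 < r →
      ∀ᵐ y ∂μ.restrict {u | d u x₀ < r},
        (μ {u | d u x₀ < r})⁻¹ *
            ∫⁻ x in {u | d u x₀ < r},
              ENNReal.ofReal (opN (matRpow (W x) (1 / p) * matRpow (W y) (-(1 / p)))) ^ p ∂μ ≤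
          ENNReal.ofReal CW)
    (dA : ℝ) (hdA0 : 0 ≤ dA) (hdAD : dA < D) (CD : ℝ)
    (hdim : ∀ (x₀ : X) (r : ℝ), 0 < r → ∀ i : ℕ,
      ∀ᵐ x ∂μ.restrict {u | d u x₀ < δ ^ (-(i : ℤ)) * r},
        (μ {u | d u x₀ < r})⁻¹ *
            ∫⁻ y in {u | d u x₀ < r},
              ENNReal.ofReal (opN (matRpow (W y) (1 / p) * matRpow (W x) (-(1 / p)))) ^ p ∂μ ≤
          ENNReal.ofReal (CD * δ ^ (-(i : ℝ) * dA)))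
    -- the reducing operators
    (A : ℤ → ι → Matrix (Fin m) (Fin m) ℂ) (hApos : ∀ k α, (A k α).PosDef)
    (c₁ c₂ : ℝ) (hc₁ : 0 < c₁) (hc₂ : 0 < c₂)
    (hred : ∀ (k : ℤ) (α : ι), ∀ η : EuclideanSpace ℂ (Fin m),
      ENNReal.ofReal c₁ *
          ((μ (cube k α))⁻¹ *
            ∫⁻ x in cube k α, (‖matCLM (matRpow (W x) (1 / p)) η‖₊ : ℝ≥0∞) ^ p ∂μ) ^ (1 / p)
          ≤ ENNReal.ofReal ‖matCLM (A k α) η‖ ∧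
        ENNReal.ofReal ‖matCLM (A k α) η‖ ≤
          ENNReal.ofReal c₂ *
            ((μ (cube k α))⁻¹ *
              ∫⁻ x in cube k α, (‖matCLM (matRpow (W x) (1 / p)) η‖₊ : ℝ≥0∞) ^ p ∂μ) ^ (1 / p)) :
    ∃ C : ℝ, 0 < C ∧ ∀ (k : ℤ) (α : ι) (j : ℤ) (β : ι),
      opN (A k α * (A j β)⁻¹) ≤
        C * max ((δ ^ j / δ ^ k) ^ (dA / p)) 1 *
          (1 + d (z j β) (z k α) / max (δ ^ j) (δ ^ k)) ^ (dA / p) := by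
  have hC₀ : 0 < C₀ := lt_of_lt_of_le hc₀ hc₀C₀
  have hA₀0 : 0 < A₀ := lt_of_lt_of_le one_pos hA₀
  have hCμ0 : 0 < Cμ := lt_of_lt_of_le one_pos hCμ
  set K : ℝ := A₀ + 1 / (2 * C₀) with hKdef
  have hK1 : 1 ≤ K := le_trans hA₀ (le_add_of_nonneg_right (by positivity))
  have hKpos : 0 < K := lt_of_lt_of_le one_pos hK1
  set lam0 : ℝ := 6 * A₀ ^ 3 * C₀ / c₀ with hlamdef
  have hlam1 : 1 ≤ lam0 := by
    rw [hlamdef, le_div_iff₀ hc₀, one_mul]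
    exact hc₀C₀.trans (le_mul_of_one_le_left hC₀.le (aux_six hA₀))
  have hlam0 : 0 < lam0 := lt_of_lt_of_le one_pos hlam1
  set CD' : ℝ := max CD 1 with hCD'def
  have hCD'1 : (1:ℝ) ≤ CD' := le_max_right _ _
  have hCD'0 : (0:ℝ) < CD' := lt_of_lt_of_le one_pos hCD'1
  set a0 : ℝ := Cμ * lam0 ^ D * CD' with ha0def
  have ha0 : 0 < a0 :=
    mul_pos (mul_pos hCμ0 (Real.rpow_pos_of_pos hlam0 D)) hCD'0
  have hCpos : 0 < (c₂ / c₁) * a0 ^ (1 / p) * (K / δ) ^ (dA / p) := by positivity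
  refine ⟨(c₂ / c₁) * a0 ^ (1 / p) * (K / δ) ^ (dA / p), hCpos, ?_⟩
  intro k α j β
  have hδk : (0:ℝ) < δ ^ k := zpow_pos hδ0 k
  have hδj : (0:ℝ) < δ ^ j := zpow_pos hδ0 j
  set L : ℝ := max (δ ^ j) (δ ^ k) with hLdef
  have hL : 0 < L := lt_of_lt_of_le hδk (le_max_right _ _)
  set dd : ℝ := d (z j β) (z k α) with hdddef
  have hdd0 : 0 ≤ dd := hd_nonneg _ _
  set G : ℝ := (1 + dd / L) * max (δ ^ j / δ ^ k) 1 with hGdef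
  have honeplus : (1:ℝ) ≤ 1 + dd / L := le_add_of_nonneg_right (div_nonneg hdd0 hL.le)
  have hmax1 : (1:ℝ) ≤ max (δ ^ j / δ ^ k) 1 := le_max_right _ _
  have hG1 : 1 ≤ G := one_le_mul_of_one_le_of_one_le honeplus hmax1
  set R : ℝ := K * G with hRdef
  have hR1 : 1 ≤ R := one_le_mul_of_one_le_of_one_le hK1 hG1
  -- choose i
  have hδinv : 1 < 1 / δ := one_lt_one_div hδ0 hδ1
  obtain ⟨n, hn⟩ := pow_unbounded_of_one_lt R hδinv
  have hex : ∃ n : ℕ, R ≤ (1 / δ) ^ n := ⟨n, hn.le⟩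
  set i := Nat.find hex with hidef
  have hiR : R ≤ (1 / δ) ^ i := Nat.find_spec hex
  have hiup : (1 / δ) ^ i ≤ R / δ := by
    rcases Nat.eq_zero_or_pos i with h0 | hpos
    · rw [h0, pow_zero]
      calc (1:ℝ) ≤ R := hR1
        _ ≤ R / δ := le_div_self (le_trans one_pos.le hR1) hδ0 hδ1.le
    · have hlt : (1 / δ) ^ (i - 1) < R := by
        by_contra hcon
        exact Nat.find_min hex (Nat.sub_lt hpos one_pos) (not_lt.mp hcon)
      have hieq : (1 / δ) ^ i = (1 / δ) ^ (i - 1) * (1 / δ) := by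
        rw [← pow_succ]
        congr 1
        omega
      rw [hieq, div_eq_mul_one_div R δ]
      exact mul_le_mul_of_nonneg_right hlt.le (by positivity)
  -- geometry
  set rQ' : ℝ := (3 * A₀ ^ 2)⁻¹ * c₀ * δ ^ k with hrQ'def
  set rQ : ℝ := 2 * A₀ * C₀ * δ ^ k with hrQdef
  have hrQ'pos : 0 < rQ' := by positivity
  have hrQpos : 0 < rQ := by positivity
  have hlamrQ : lam0 * rQ' = rQ := by
    rw [hlamdef, hrQ'def, hrQdef]
    field_simp
    ring
  set BQ := {u | d u (z k α) < rQ} with hBQdef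
  have hQsub : cube k α ⊆ BQ := (hsandwich k α).2
  have hBQpos : 0 < μ BQ := (hballμ _ _ hrQpos).1
  have hBQtop : μ BQ < ⊤ := (hballμ _ _ hrQpos).2
  have hμQ0 : μ (cube k α) ≠ 0 := (hcubeμ k α).2.1.ne'
  have hμQt : μ (cube k α) ≠ ⊤ := (hcubeμ k α).2.2.ne
  have hμP0 : μ (cube j β) ≠ 0 := (hcubeμ j β).2.1.ne'
  have hμPt : μ (cube j β) ≠ ⊤ := (hcubeμ j β).2.2.ne
  have hμBQ : μ BQ ≤ ENNReal.ofReal (Cμ * lam0 ^ D) * μ (cube k α) := by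
    have h1 := hdoub (z k α) rQ' lam0 hrQ'pos hlam1
    rw [hlamrQ] at h1
    exact h1.trans (mul_le_mul_right (measure_mono (hsandwich k α).1) _)
  have hzpow : δ ^ (-(i:ℤ)) = (1 / δ) ^ i := by
    rw [zpow_neg, zpow_natCast, one_div, inv_pow]
  have hmaxL : max (δ ^ j / δ ^ k) 1 * δ ^ k = L := by
    rw [max_mul_of_nonneg _ _ hδk.le, div_mul_cancel₀ _ (ne_of_gt hδk), one_mul]
  have hGL : G * δ ^ k = L + dd := by
    rw [hGdef, mul_assoc, hmaxL]
    field_simp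
  have hPsub : cube j β ⊆ {u | d u (z k α) < δ ^ (-(i:ℤ)) * rQ} := by
    intro y hy
    have hy' : d y (z j β) < 2 * A₀ * C₀ * δ ^ j := (hsandwich j β).2 hy
    have htri : d y (z k α) ≤ A₀ * (d y (z j β) + dd) := hd_tri _ _ _
    have hKC : 2 * A₀ * C₀ * K = 2 * A₀ ^ 2 * C₀ + A₀ := by
      rw [hKdef]
      field_simp
    have hRrQ : A₀ * (2 * A₀ * C₀ * δ ^ j + dd) ≤ R * rQ := by
      have hRe : R * rQ = (2 * A₀ ^ 2 * C₀ + A₀) * (L + dd) := by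
        rw [hRdef, hrQdef, ← hKC]
        calc K * G * (2 * A₀ * C₀ * δ ^ k) = 2 * A₀ * C₀ * K * (G * δ ^ k) := by ring
          _ = 2 * A₀ * C₀ * K * (L + dd) := by rw [hGL]
      rw [hRe]
      have hδjL : δ ^ j ≤ L := le_max_left _ _
      exact aux_geom hA₀0 hC₀ hdd0 hδj.le hδjL
    have hRle : R * rQ ≤ δ ^ (-(i:ℤ)) * rQ := by
      rw [hzpow]
      exact mul_le_mul_of_nonneg_right hiR hrQpos.le
    have hlt2 : d y (z k α) < A₀ * (2 * A₀ * C₀ * δ ^ j + dd) :=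
      lt_of_le_of_lt htri (mul_lt_mul_of_pos_left (add_lt_add_left hy' dd) hA₀0)
    exact Set.mem_setOf.mpr (lt_of_lt_of_le hlt2 (hRrQ.trans hRle))
  -- the a.e. good set on P
  set Kb : ℝ≥0∞ := ENNReal.ofReal (Cμ * lam0 ^ D) *
    ENNReal.ofReal (CD' * δ ^ (-(i:ℝ) * dA)) with hKbdef
  have hKbt : Kb ≠ ⊤ := ENNReal.mul_ne_top ENNReal.ofReal_ne_top ENNReal.ofReal_ne_top
  have hae : ∀ᵐ y ∂μ.restrict (cube j β), IsUnit (W y) ∧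
      (μ BQ)⁻¹ * ∫⁻ x in BQ,
        ENNReal.ofReal (opN (matRpow (W x) (1 / p) * matRpow (W y) (-(1 / p)))) ^ p ∂μ ≤
      ENNReal.ofReal (CD * δ ^ (-(i:ℝ) * dA)) := by
    refine (ae_restrict_of_ae hWinv).and ?_
    have h2 := hdim (z k α) rQ hrQpos i
    exact h2.filter_mono (ae_mono (Measure.restrict_mono hPsub le_rfl))
  -- per-vector estimate
  have key : ∀ η : EuclideanSpace ℂ (Fin m),
      ‖matCLM (A k α * (A j β)⁻¹) η‖ ≤
        (c₂ / c₁ * a0 ^ (1 / p) * (K / δ) ^ (dA / p) * max ((δ ^ j / δ ^ k) ^ (dA / p)) 1 *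
          (1 + dd / L) ^ (dA / p)) * ‖η‖ := by
    intro η
    set ζ := matCLM ((A j β)⁻¹) η with hζdef
    set T := (μ (cube k α))⁻¹ *
      ∫⁻ x in cube k α, (‖matCLM (matRpow (W x) (1 / p)) ζ‖₊ : ℝ≥0∞) ^ p ∂μ with hTdef
    set S := (μ (cube j β))⁻¹ *
      ∫⁻ x in cube j β, (‖matCLM (matRpow (W x) (1 / p)) ζ‖₊ : ℝ≥0∞) ^ p ∂μ with hSdef
    have hfrac : (μ (cube k α))⁻¹ * μ BQ ≤ ENNReal.ofReal (Cμ * lam0 ^ D) := by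
      calc (μ (cube k α))⁻¹ * μ BQ
          ≤ (μ (cube k α))⁻¹ * (ENNReal.ofReal (Cμ * lam0 ^ D) * μ (cube k α)) :=
            mul_le_mul_right hμBQ _
        _ = ENNReal.ofReal (Cμ * lam0 ^ D) * ((μ (cube k α))⁻¹ * μ (cube k α)) := by ring
        _ = ENNReal.ofReal (Cμ * lam0 ^ D) := by
            rw [ENNReal.inv_mul_cancel hμQ0 hμQt, mul_one]
    -- Step A
    have stepA : ∀ᵐ y ∂μ.restrict (cube j β),
        T ≤ Kb * (‖matCLM (matRpow (W y) (1 / p)) ζ‖₊ : ℝ≥0∞) ^ p := by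
      filter_upwards [hae] with y hy
      obtain ⟨hy1, hy2⟩ := hy
      have hWy : (W y).PosDef := posDef_of_posSemidef_isUnit (hW y) hy1
      set cy : ℝ≥0∞ := (‖matCLM (matRpow (W y) (1 / p)) ζ‖₊ : ℝ≥0∞) ^ p with hcydef
      have hcyt : cy ≠ ⊤ := ENNReal.rpow_ne_top_of_nonneg hp0.le ENNReal.coe_ne_top
      have hpt : ∀ x : X, (‖matCLM (matRpow (W x) (1 / p)) ζ‖₊ : ℝ≥0∞) ^ p ≤
          cy * ENNReal.ofReal (opN (matRpow (W x) (1 / p) * matRpow (W y) (-(1 / p)))) ^ p := by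
        intro x
        have hid : matRpow (W y) (-(1 / p)) * matRpow (W y) (1 / p) = 1 := by
          have h := matRpow_mul_matRpow_neg hWy (-(1 / p))
          rwa [neg_neg] at h
        have heq : matCLM (matRpow (W x) (1 / p) * matRpow (W y) (-(1 / p)))
              (matCLM (matRpow (W y) (1 / p)) ζ) = matCLM (matRpow (W x) (1 / p)) ζ := by
          rw [← matCLM_mul_apply, mul_assoc, hid, mul_one]
        have hnorm : ‖matCLM (matRpow (W x) (1 / p)) ζ‖ ≤
            opN (matRpow (W x) (1 / p) * matRpow (W y) (-(1 / p))) *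
              ‖matCLM (matRpow (W y) (1 / p)) ζ‖ := by
          calc ‖matCLM (matRpow (W x) (1 / p)) ζ‖
              = ‖matCLM (matRpow (W x) (1 / p) * matRpow (W y) (-(1 / p)))
                  (matCLM (matRpow (W y) (1 / p)) ζ)‖ := by rw [heq]
            _ ≤ _ := ContinuousLinearMap.le_opNorm
                (matCLM (matRpow (W x) (1 / p) * matRpow (W y) (-(1 / p))))
                (matCLM (matRpow (W y) (1 / p)) ζ)
        calc (‖matCLM (matRpow (W x) (1 / p)) ζ‖₊ : ℝ≥0∞) ^ p
            = ENNReal.ofReal ‖matCLM (matRpow (W x) (1 / p)) ζ‖ ^ p := by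
              rw [ofReal_norm, enorm_eq_nnnorm]
          _ ≤ ENNReal.ofReal (opN (matRpow (W x) (1 / p) * matRpow (W y) (-(1 / p))) *
                ‖matCLM (matRpow (W y) (1 / p)) ζ‖) ^ p :=
              ENNReal.rpow_le_rpow (ENNReal.ofReal_le_ofReal hnorm) hp0.le
          _ = cy * ENNReal.ofReal (opN (matRpow (W x) (1 / p) * matRpow (W y) (-(1 / p)))) ^ p := by
              rw [ENNReal.ofReal_mul (opN_nonneg _), ENNReal.mul_rpow_of_nonneg _ _ hp0.le,
                ofReal_norm, enorm_eq_nnnorm, hcydef, mul_comm]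
      have h1 : ∫⁻ x in cube k α, (‖matCLM (matRpow (W x) (1 / p)) ζ‖₊ : ℝ≥0∞) ^ p ∂μ ≤
          cy * ∫⁻ x in BQ,
            ENNReal.ofReal (opN (matRpow (W x) (1 / p) * matRpow (W y) (-(1 / p)))) ^ p ∂μ := by
        calc ∫⁻ x in cube k α, (‖matCLM (matRpow (W x) (1 / p)) ζ‖₊ : ℝ≥0∞) ^ p ∂μ
            ≤ ∫⁻ x in cube k α, cy *
              ENNReal.ofReal (opN (matRpow (W x) (1 / p) * matRpow (W y) (-(1 / p)))) ^ p ∂μ :=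
              lintegral_mono fun x => hpt x
          _ = cy * ∫⁻ x in cube k α,
              ENNReal.ofReal (opN (matRpow (W x) (1 / p) * matRpow (W y) (-(1 / p)))) ^ p ∂μ :=
              lintegral_const_mul' _ _ hcyt
          _ ≤ cy * ∫⁻ x in BQ,
              ENNReal.ofReal (opN (matRpow (W x) (1 / p) * matRpow (W y) (-(1 / p)))) ^ p ∂μ :=
              mul_le_mul_right (lintegral_mono' (Measure.restrict_mono hQsub le_rfl) le_rfl) _
      set IB := ∫⁻ x in BQ,
        ENNReal.ofReal (opN (matRpow (W x) (1 / p) * matRpow (W y) (-(1 / p)))) ^ p ∂μ with hIBdef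
      have hBQ1 : μ BQ * (μ BQ)⁻¹ = 1 := ENNReal.mul_inv_cancel hBQpos.ne' hBQtop.ne
      have hseg : (μ BQ)⁻¹ * IB ≤ ENNReal.ofReal (CD' * δ ^ (-(i:ℝ) * dA)) := by
        refine hy2.trans (ENNReal.ofReal_le_ofReal ?_)
        exact mul_le_mul_of_nonneg_right (le_max_left _ _) (Real.rpow_nonneg hδ0.le _)
      calc T ≤ (μ (cube k α))⁻¹ * (cy * IB) := mul_le_mul_right h1 _
        _ = cy * (((μ (cube k α))⁻¹ * μ BQ) * ((μ BQ)⁻¹ * IB)) := by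
            have he : cy * (((μ (cube k α))⁻¹ * μ BQ) * ((μ BQ)⁻¹ * IB)) =
                (μ (cube k α))⁻¹ * (cy * ((μ BQ * (μ BQ)⁻¹) * IB)) := by ring
            rw [he, hBQ1, one_mul]
        _ ≤ cy * (ENNReal.ofReal (Cμ * lam0 ^ D) * ENNReal.ofReal (CD' * δ ^ (-(i:ℝ) * dA))) :=
            mul_le_mul_right (mul_le_mul' hfrac hseg) _
        _ = Kb * cy := by rw [hKbdef, mul_comm]
    -- Step B: average over P
    have hTS : T ≤ Kb * S := by
      have hTP : T * μ (cube j β) ≤ Kb *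
          ∫⁻ x in cube j β, (‖matCLM (matRpow (W x) (1 / p)) ζ‖₊ : ℝ≥0∞) ^ p ∂μ := by
        calc T * μ (cube j β) = ∫⁻ _ in cube j β, T ∂μ := (setLIntegral_const _ T).symm
          _ ≤ ∫⁻ y in cube j β,
              Kb * (‖matCLM (matRpow (W y) (1 / p)) ζ‖₊ : ℝ≥0∞) ^ p ∂μ :=
              lintegral_mono_ae stepA
          _ = Kb * ∫⁻ x in cube j β, (‖matCLM (matRpow (W x) (1 / p)) ζ‖₊ : ℝ≥0∞) ^ p ∂μ :=
              lintegral_const_mul' _ _ hKbt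
      have h2 := mul_le_mul_left hTP (μ (cube j β))⁻¹
      have hl : T * μ (cube j β) * (μ (cube j β))⁻¹ = T := by
        rw [mul_assoc, ENNReal.mul_inv_cancel hμP0 hμPt, mul_one]
      have hr : Kb * (∫⁻ x in cube j β, (‖matCLM (matRpow (W x) (1 / p)) ζ‖₊ : ℝ≥0∞) ^ p ∂μ) *
          (μ (cube j β))⁻¹ = Kb * S := by
        rw [hSdef]
        ring
      rwa [hl, hr] at h2
    -- Step C: reducing operators
    have hdet : IsUnit (A j β).det := isUnit_iff_ne_zero.mpr (hApos j β).det_pos.ne'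
    have hAζ : matCLM (A j β) ζ = η := by
      rw [hζdef, ← matCLM_mul_apply, Matrix.mul_nonsing_inv _ hdet]
      simp [matCLM]
    have hred1 := (hred j β ζ).1
    have hred2 := (hred k α ζ).2
    rw [hAζ] at hred1
    have hc₁0 : ENNReal.ofReal c₁ ≠ 0 := by
      simp [ENNReal.ofReal_eq_zero, not_le, hc₁]
    have hS1 : S ^ (1 / p) ≤ ENNReal.ofReal ‖η‖ / ENNReal.ofReal c₁ := by
      rw [ENNReal.le_div_iff_mul_le (Or.inl hc₁0) (Or.inl ENNReal.ofReal_ne_top), mul_comm]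
      exact hred1
    have hp1p : (0:ℝ) ≤ 1 / p := by positivity
    have hTfin : ENNReal.ofReal ‖matCLM (A k α) ζ‖ ≤
        ENNReal.ofReal c₂ * (Kb ^ (1 / p) * (ENNReal.ofReal ‖η‖ / ENNReal.ofReal c₁)) := by
      refine hred2.trans (mul_le_mul_right ?_ _)
      calc T ^ (1 / p) ≤ (Kb * S) ^ (1 / p) := ENNReal.rpow_le_rpow hTS hp1p
        _ = Kb ^ (1 / p) * S ^ (1 / p) := ENNReal.mul_rpow_of_nonneg _ _ hp1p
        _ ≤ Kb ^ (1 / p) * (ENNReal.ofReal ‖η‖ / ENNReal.ofReal c₁) := mul_le_mul_right hS1 _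
    set breal : ℝ := Cμ * lam0 ^ D * (CD' * δ ^ (-(i:ℝ) * dA)) with hbrealdef
    have hbpos : 0 < breal :=
      mul_pos (mul_pos hCμ0 (Real.rpow_pos_of_pos hlam0 D))
        (mul_pos hCD'0 (Real.rpow_pos_of_pos hδ0 _))
    have hKbeq : Kb = ENNReal.ofReal breal := by
      rw [hKbdef, hbrealdef, ← ENNReal.ofReal_mul (by positivity)]
    have hfinal1 : ‖matCLM (A k α * (A j β)⁻¹) η‖ ≤ c₂ * (breal ^ (1 / p) * (‖η‖ / c₁)) := by
      have h3 : ENNReal.ofReal ‖matCLM (A k α) ζ‖ ≤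
          ENNReal.ofReal (c₂ * (breal ^ (1 / p) * (‖η‖ / c₁))) := by
        refine hTfin.trans_eq ?_
        rw [hKbeq, ENNReal.ofReal_rpow_of_pos hbpos, ← ENNReal.ofReal_div_of_pos hc₁,
          ← ENNReal.ofReal_mul (by positivity), ← ENNReal.ofReal_mul hc₂.le]
      have h4 := (ENNReal.ofReal_le_ofReal_iff (by positivity)).mp h3
      rwa [matCLM_mul_apply, ← hζdef]
    -- Step D: real arithmetic
    have hpowi : δ ^ (-(i:ℝ) * dA) ≤ (R / δ) ^ dA := by
      have h1 : δ ^ (-(i:ℝ) * dA) = ((1 / δ) ^ i) ^ dA := by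
        rw [Real.rpow_mul hδ0.le, Real.rpow_neg hδ0.le, Real.rpow_natCast, one_div, inv_pow]
      rw [h1]
      exact Real.rpow_le_rpow (by positivity) hiup hdA0
    have hmaxp : (max (δ ^ j / δ ^ k) 1 : ℝ) ^ (dA / p) = max ((δ ^ j / δ ^ k) ^ (dA / p)) 1 := by
      have he : (0:ℝ) ≤ dA / p := by positivity
      rcases le_total (δ ^ j / δ ^ k) 1 with h | h
      · rw [max_eq_right h, Real.one_rpow,
          max_eq_right (Real.rpow_le_one (by positivity) h he)]
      · rw [max_eq_left h, max_eq_left (Real.one_le_rpow h he)]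
    have hbub : breal ^ (1 / p) ≤ a0 ^ (1 / p) * ((K / δ) ^ (dA / p) *
        ((1 + dd / L) ^ (dA / p) * max ((δ ^ j / δ ^ k) ^ (dA / p)) 1)) := by
      have hRδ : R / δ = (K / δ) * ((1 + dd / L) * max (δ ^ j / δ ^ k) 1) := by
        rw [hRdef, hGdef]
        ring
      have hble : breal ≤ a0 * ((K / δ) ^ dA * ((1 + dd / L) ^ dA *
          (max (δ ^ j / δ ^ k) 1) ^ dA)) := by
        have h5 : (R / δ) ^ dA = (K / δ) ^ dA * ((1 + dd / L) ^ dA *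
            (max (δ ^ j / δ ^ k) 1) ^ dA) := by
          rw [hRδ, Real.mul_rpow (by positivity) (by positivity),
            Real.mul_rpow (by positivity) (by positivity)]
        calc breal = a0 * δ ^ (-(i:ℝ) * dA) := by rw [hbrealdef, ha0def]; ring
          _ ≤ a0 * (R / δ) ^ dA := mul_le_mul_of_nonneg_left hpowi ha0.le
          _ = _ := by rw [h5]
      calc breal ^ (1 / p) ≤ (a0 * ((K / δ) ^ dA * ((1 + dd / L) ^ dA *
            (max (δ ^ j / δ ^ k) 1) ^ dA))) ^ (1 / p) :=
            Real.rpow_le_rpow hbpos.le hble hp1p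
        _ = a0 ^ (1 / p) * ((K / δ) ^ (dA / p) *
            ((1 + dd / L) ^ (dA / p) * max ((δ ^ j / δ ^ k) ^ (dA / p)) 1)) := by
            have e1 : ((K / δ) ^ dA) ^ (1 / p) = (K / δ) ^ (dA / p) := by
              rw [← Real.rpow_mul (by positivity : (0:ℝ) ≤ K / δ), mul_one_div]
            have e2 : ((1 + dd / L) ^ dA) ^ (1 / p) = (1 + dd / L) ^ (dA / p) := by
              rw [← Real.rpow_mul (by positivity : (0:ℝ) ≤ 1 + dd / L), mul_one_div]
            have e3 : ((max (δ ^ j / δ ^ k) 1) ^ dA) ^ (1 / p) =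
                (max (δ ^ j / δ ^ k) 1) ^ (dA / p) := by
              rw [← Real.rpow_mul (by positivity : (0:ℝ) ≤ max (δ ^ j / δ ^ k) 1), mul_one_div]
            rw [Real.mul_rpow (by positivity) (by positivity),
              Real.mul_rpow (by positivity) (by positivity),
              Real.mul_rpow (by positivity) (by positivity)]
            rw [Real.mul_rpow (by positivity) (by positivity),
              Real.mul_rpow (by positivity) (by positivity)]
            rw [e1, e2, e3, hmaxp]
    calc ‖matCLM (A k α * (A j β)⁻¹) η‖ ≤ c₂ * (breal ^ (1 / p) * (‖η‖ / c₁)) := hfinal1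
      _ = (c₂ / c₁) * breal ^ (1 / p) * ‖η‖ := by
          field_simp
      _ ≤ (c₂ / c₁) * (a0 ^ (1 / p) * ((K / δ) ^ (dA / p) *
            ((1 + dd / L) ^ (dA / p) * max ((δ ^ j / δ ^ k) ^ (dA / p)) 1))) * ‖η‖ := by
          refine mul_le_mul_of_nonneg_right ?_ (norm_nonneg _)
          exact mul_le_mul_of_nonneg_left hbub (by positivity)
      _ = (c₂ / c₁ * a0 ^ (1 / p) * (K / δ) ^ (dA / p) * max ((δ ^ j / δ ^ k) ^ (dA / p)) 1 *
            (1 + dd / L) ^ (dA / p)) * ‖η‖ := by ring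
  -- conclude
  have hbound : 0 ≤ c₂ / c₁ * a0 ^ (1 / p) * (K / δ) ^ (dA / p) *
      max ((δ ^ j / δ ^ k) ^ (dA / p)) 1 * (1 + dd / L) ^ (dA / p) := by
    have h1 : (0:ℝ) ≤ max ((δ ^ j / δ ^ k) ^ (dA / p)) 1 := le_max_of_le_right one_pos.le
    have h2 : (0:ℝ) ≤ (1 + dd / L) ^ (dA / p) := Real.rpow_nonneg (by positivity) _
    positivity
  exact ContinuousLinearMap.opNorm_le_bound _ hbound key
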